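/- Let φ : G → F be a homomorphism to a free group with nonabelian image, and let R₁, R₂ be subsets of G. Suppose φ kills every commutator [r₂^s, r₁] for r₁ ∈ R₁, r₂ ∈ R₂, and s ranging over a generating set of G together with 1. Then φ kills all of R₁ or φ kills all of R₂. -/

import Mathlib

/- Auxiliary development: commutation properties of free groups
   (commutative transitivity and conjugacy-commutation), proved via
   Nielsen--Schreier and reduced-word combinatorics. -/

set_option linter.unusedSectionVars false
set_option linter.unusedVariables false

namespace FGAux


open FreeGroup List

variable {β : Type*} [DecidableEq β]

lemma invRev_cons (x : β × Bool) (l : List (β × Bool)) :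
    FreeGroup.invRev (x :: l) = FreeGroup.invRev l ++ [(x.1, !x.2)] := by
  simp [FreeGroup.invRev]

lemma head?_invRev (l : List (β × Bool)) :
    (FreeGroup.invRev l).head? = l.getLast?.map (fun p => (p.1, !p.2)) := by
  rw [FreeGroup.invRev, List.head?_reverse, List.getLast?_map]

lemma key (c : FreeGroup β) (t : β) (hc : c ≠ 1)
    (hlast : ∀ p ∈ c.toWord.getLast?, p.1 ≠ t) : ¬ Commute c (FreeGroup.of t) := by
  intro hcom
  set w := c.toWord with hwdef
  have hw : w ≠ [] := by simpa [hwdef] using hc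
  obtain ⟨⟨ℓ, ε⟩, hl⟩ : ∃ p, w.getLast? = some p := by
    cases h : w.getLast? with
    | none => exact absurd (List.getLast?_eq_none_iff.mp h) hw
    | some p => exact ⟨p, rfl⟩
  have hℓt : ℓ ≠ t := hlast _ hl
  -- reduced words
  have hredw : FreeGroup.reduce w = w := c.reduce_toWord
  have hinvw : (c⁻¹).toWord = FreeGroup.invRev w := by rw [FreeGroup.toWord_inv]
  have hredinv : FreeGroup.reduce (FreeGroup.invRev w) = FreeGroup.invRev w := by
    rw [← hinvw]; exact (c⁻¹).reduce_toWord
  -- compute toWord ((of t)⁻¹ * c⁻¹)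
  have h1 : ((FreeGroup.of t)⁻¹ * c⁻¹).toWord = (t, false) :: FreeGroup.invRev w := by
    have : (FreeGroup.of t)⁻¹ * c⁻¹ = FreeGroup.mk ((t, false) :: FreeGroup.invRev w) := by
      rw [← FreeGroup.mk_toWord (x := c⁻¹), hinvw,
        show (FreeGroup.of t)⁻¹ = FreeGroup.mk [(t, false)] by
          rw [FreeGroup.of, FreeGroup.inv_mk]; simp [FreeGroup.invRev],
        FreeGroup.mul_mk]
      rfl
    rw [this, FreeGroup.toWord_mk, FreeGroup.reduce.cons]
    cases hiv : FreeGroup.invRev w with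
    | nil =>
        exfalso
        apply hw
        have := congrArg FreeGroup.invRev hiv
        rwa [FreeGroup.invRev_invRev, FreeGroup.invRev_empty] at this
    | cons hd tl =>
        have hhd : hd.1 = ℓ := by
          have := head?_invRev w
          rw [hiv, hl] at this
          simp only [Option.map_some, List.head?_cons, Option.some_inj] at this
          rw [this]
        rw [← hiv, hredinv, hiv]
        have : ¬ ((t = hd.1) ∧ (false : Bool) = !hd.2) := by
          rintro ⟨h1, -⟩
          exact hℓt (hhd ▸ h1.symm)
        simp only [this, if_false]
  -- hence toWord (c * of t) = w ++ [(t,true)]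
  have h2 : (c * FreeGroup.of t).toWord = w ++ [(t, true)] := by
    have : c * FreeGroup.of t = ((FreeGroup.of t)⁻¹ * c⁻¹)⁻¹ := by group
    rw [this, FreeGroup.toWord_inv, h1, invRev_cons, FreeGroup.invRev_invRev]
    norm_num
  -- compute toWord (of t * c)
  have h3 : (FreeGroup.of t * c).toWord = FreeGroup.reduce ((t, true) :: w) := by
    have : FreeGroup.of t * c = FreeGroup.mk ((t, true) :: w) := by
      rw [← FreeGroup.mk_toWord (x := c), ← hwdef, FreeGroup.of, FreeGroup.mul_mk]
      rfl
    rw [this, FreeGroup.toWord_mk]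
  have heq : w ++ [(t, true)] = FreeGroup.reduce ((t, true) :: w) := by
    rw [← h2, ← h3, hcom.eq]
  rw [FreeGroup.reduce.cons, hredw] at heq
  cases hwc : w with
  | nil => exact hw hwc
  | cons hd tl =>
      rw [hwc] at heq
      by_cases hcase : (t = hd.1) ∧ (true : Bool) = !hd.2
      · simp only [hcase, if_true] at heq
        have := congrArg List.length heq
        simp at this
        omega
      · simp only [hcase, if_false] at heq
        -- heq : (hd :: tl) ++ [(t,true)] = (t,true) :: hd :: tl
        have hlast' := congrArg List.getLast? heq
        rw [List.getLast?_concat] at hlast'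
        have : ((t, true) :: hd :: tl).getLast? = (hd :: tl).getLast? := by
          rw [show ((t, true) :: hd :: tl) = [(t,true)] ++ (hd :: tl) from rfl]
          exact List.getLast?_append_of_ne_nil _ (by simp)
        rw [this, ← hwc, hl] at hlast'
        simp only [Option.some_inj, Prod.mk.injEq] at hlast'
        exact hℓt hlast'.1.symm

open FreeGroup

variable {β : Type*}

lemma comm_of_subsingleton [Subsingleton β] (u v : FreeGroup β) : Commute u v := by
  rcases isEmpty_or_nonempty β with h | ⟨⟨a⟩⟩
  · have hall : ∀ w : FreeGroup β, w = 1 := by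
      intro w
      refine FreeGroup.induction_on w rfl (fun x => h.elim x) (fun x _ => h.elim x)
        (fun x y hx hy => by rw [hx, hy, one_mul])
    rw [hall u, hall v]
  · have hmem : ∀ w : FreeGroup β, ∃ n : ℤ, w = FreeGroup.of a ^ n := by
      intro w
      have h1 : w ∈ Subgroup.closure (Set.range (FreeGroup.of : β → FreeGroup β)) := by
        rw [FreeGroup.closure_range_of]; trivial
      have h2 : Set.range (FreeGroup.of : β → FreeGroup β) = {FreeGroup.of a} := by
        ext x; simp only [Set.mem_range, Set.mem_singleton_iff]
        constructor
        · rintro ⟨b, rfl⟩; rw [Subsingleton.elim b a]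
        · rintro rfl; exact ⟨a, rfl⟩
      rw [h2] at h1
      obtain ⟨n, hn⟩ := Subgroup.mem_closure_singleton.mp h1
      exact ⟨n, hn.symm⟩
    obtain ⟨n, rfl⟩ := hmem u
    obtain ⟨m, rfl⟩ := hmem v
    exact (Commute.refl _).zpow_zpow n m

lemma not_commute_of_ne {a b : β} (h : a ≠ b) :
    ¬ Commute (FreeGroup.of a) (FreeGroup.of b) := by
  classical
  intro hcom
  let f : β → Equiv.Perm (Fin 3) := fun x =>
    if x = a then Equiv.swap 0 1 else if x = b then Equiv.swap 1 2 else 1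
  have hthis := hcom.map (FreeGroup.lift f)
  have hfa : f a = Equiv.swap 0 1 := by simp [f]
  have hfb : f b = Equiv.swap 1 2 := by simp [f, h, Ne.symm h]
  rw [Commute, SemiconjBy, FreeGroup.lift_apply_of, FreeGroup.lift_apply_of, hfa, hfb] at hthis
  exact absurd hthis (by decide)

lemma subsingleton_of_isFreeGroup_finite (H : Type*) [Group H] [IsFreeGroup H] [Finite H] :
    Subsingleton H := by
  rcases isEmpty_or_nonempty (IsFreeGroup.Generators H) with h | ⟨⟨a⟩⟩
  · have : Subsingleton (FreeGroup (IsFreeGroup.Generators H)) := by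
      constructor
      intro u v
      have hall : ∀ w : FreeGroup (IsFreeGroup.Generators H), w = 1 := by
        intro w
        refine FreeGroup.induction_on w rfl (fun x => h.elim x) (fun x _ => h.elim x)
          (fun x y hx hy => by rw [hx, hy, one_mul])
      rw [hall u, hall v]
    exact (IsFreeGroup.toFreeGroup (G := H)).toEquiv.subsingleton
  · exfalso
    let ψ : H →* Multiplicative ℤ :=
      IsFreeGroup.lift (fun _ => Multiplicative.ofAdd (1 : ℤ))
    have hmem : Multiplicative.ofAdd (1 : ℤ) ∈ ψ.range :=
      ⟨IsFreeGroup.of a, IsFreeGroup.lift_of _ _⟩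
    have hfin : (Set.range ψ).Finite := Set.finite_range ψ
    have hsub : (Subgroup.zpowers (Multiplicative.ofAdd (1 : ℤ)) : Set (Multiplicative ℤ))
        ⊆ Set.range ψ := by
      rintro x ⟨n, rfl⟩
      exact ⟨(IsFreeGroup.of a) ^ n, by rw [map_zpow, IsFreeGroup.lift_of]⟩
    have : IsOfFinOrder (Multiplicative.ofAdd (1 : ℤ)) :=
      finite_zpowers.mp (hfin.subset hsub)
    obtain ⟨n, hn, hpow⟩ := isOfFinOrder_iff_pow_eq_one.mp this
    have : (n : ℤ) = 0 := by
      have := congrArg Multiplicative.toAdd hpow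
      simpa [← ofAdd_nsmul] using this
    omega

lemma eq_one_of_pow {α : Type*} (g : FreeGroup α) {n : ℤ} (hn : n ≠ 0) (h : g ^ n = 1) :
    g = 1 := by
  have hfo : IsOfFinOrder g := by
    rcases lt_or_gt_of_ne hn with hneg | hpos
    · refine isOfFinOrder_iff_pow_eq_one.mpr ⟨(-n).toNat, by omega, ?_⟩
      rw [← zpow_natCast, Int.toNat_of_nonneg (by omega), zpow_neg, h, inv_one]
    · refine isOfFinOrder_iff_pow_eq_one.mpr ⟨n.toNat, by omega, ?_⟩
      rw [← zpow_natCast, Int.toNat_of_nonneg (by omega), h]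
  have hfin : (Subgroup.zpowers g : Set (FreeGroup α)).Finite := finite_zpowers.mpr hfo
  haveI : Finite (Subgroup.zpowers g) := hfin.to_subtype
  haveI : IsFreeGroup (Subgroup.zpowers g) := inferInstance
  haveI := subsingleton_of_isFreeGroup_finite (Subgroup.zpowers g)
  have : (⟨g, Subgroup.mem_zpowers g⟩ : Subgroup.zpowers g) = ⟨1, one_mem _⟩ :=
    Subsingleton.elim _ _
  exact Subtype.ext_iff.mp this


open FreeGroup

-- placeholders for already-proved lemmas
variable {β : Type*}

lemma eq_one_of_isEmpty {β : Type*} [IsEmpty β] (w : FreeGroup β) : w = 1 := by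
  refine FreeGroup.induction_on w rfl (fun x => IsEmpty.elim ‹_› x) (fun x _ => IsEmpty.elim ‹_› x)
    (fun x y hx hy => by rw [hx, hy, one_mul])

variable {α : Type*}

lemma centralizer_cyclic (x : FreeGroup α) (hx : x ≠ 1) :
    ∃ z : FreeGroup α, Commute x z ∧ ∀ y, Commute x y → ∃ n : ℤ, y = z ^ n := by
  classical
  set H := Subgroup.centralizer ({x} : Set (FreeGroup α)) with hH
  have hmemH : ∀ g, g ∈ H ↔ Commute x g := by
    intro g
    rw [hH, Subgroup.mem_centralizer_iff]
    simp only [Set.mem_singleton_iff, forall_eq]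
    rfl
  set e : ↥H ≃* FreeGroup (IsFreeGroup.Generators ↥H) := IsFreeGroup.toFreeGroup ↥H with he
  set xH : ↥H := ⟨x, (hmemH x).mpr (Commute.refl x)⟩ with hxH
  set c := e xH with hc'
  have hc : c ≠ 1 := by
    intro h
    apply hx
    have : xH = 1 := by
      rw [hc'] at h
      simpa using h
    exact congrArg Subtype.val this
  have hcent : ∀ t : IsFreeGroup.Generators ↥H, Commute c (FreeGroup.of t) := by
    intro t
    have h1 : Commute x ↑(e.symm (FreeGroup.of t)) := (hmemH _).mp (e.symm (FreeGroup.of t)).2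
    have h2 : Commute xH (e.symm (FreeGroup.of t)) := Subtype.ext h1
    have h3 := h2.map e.toMonoidHom
    simpa using h3
  have hsub : Subsingleton (IsFreeGroup.Generators ↥H) := by
    by_contra hns
    rw [not_subsingleton_iff_nontrivial] at hns
    obtain ⟨a, b, hab⟩ := exists_pair_ne (IsFreeGroup.Generators ↥H)
    have hw : c.toWord ≠ [] := by simpa using hc
    obtain ⟨⟨ℓ, ε⟩, hl⟩ : ∃ p, c.toWord.getLast? = some p := by
      cases h : c.toWord.getLast? with
      | none => exact absurd (List.getLast?_eq_none_iff.mp h) hw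
      | some p => exact ⟨p, rfl⟩
    set t := if ℓ = a then b else a with ht'
    have ht : ℓ ≠ t := by
      by_cases hla : ℓ = a
      · simpa [ht', hla] using hab
      · simp [ht', hla]
    refine key c t hc ?_ (hcent t)
    intro p hp
    rw [hl, Option.mem_some_iff] at hp
    rw [← hp]
    exact ht
  rcases isEmpty_or_nonempty (IsFreeGroup.Generators ↥H) with hemp | ⟨⟨a⟩⟩
  · exact absurd (eq_one_of_isEmpty c) hc
  · refine ⟨↑(e.symm (FreeGroup.of a)), (hmemH _).mp (e.symm (FreeGroup.of a)).2, ?_⟩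
    intro y hy
    set yH : ↥H := ⟨y, (hmemH y).mpr hy⟩ with hyH
    have h1 : e yH ∈ Subgroup.closure ({FreeGroup.of a} :
        Set (FreeGroup (IsFreeGroup.Generators ↥H))) := by
      have h2 : Set.range (FreeGroup.of : IsFreeGroup.Generators ↥H → _) = {FreeGroup.of a} := by
        ext w
        simp only [Set.mem_range, Set.mem_singleton_iff]
        constructor
        · rintro ⟨b, rfl⟩; rw [Subsingleton.elim b a]
        · rintro rfl; exact ⟨a, rfl⟩
      rw [← h2, FreeGroup.closure_range_of]
      trivial
    obtain ⟨n, hn⟩ := Subgroup.mem_closure_singleton.mp h1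
    refine ⟨n, ?_⟩
    have : yH = (e.symm (FreeGroup.of a)) ^ n := by
      rw [← map_zpow, hn]
      exact (e.symm_apply_apply yH).symm
    have := congrArg Subtype.val this
    rwa [SubgroupClass.coe_zpow] at this

lemma commute_trans {x y z : FreeGroup α} (hx : x ≠ 1) (h1 : Commute x y) (h2 : Commute x z) :
    Commute y z := by
  obtain ⟨w, -, hgen⟩ := centralizer_cyclic x hx
  obtain ⟨n, rfl⟩ := hgen y h1
  obtain ⟨m, rfl⟩ := hgen z h2
  exact (Commute.refl w).zpow_zpow n m

lemma commute_of_conj_commute {x g : FreeGroup α} (hx : x ≠ 1)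
    (hcom : Commute (g * x * g⁻¹) x) : Commute g x := by
  obtain ⟨z, hxz, hgen⟩ := centralizer_cyclic x hx
  obtain ⟨k, hk⟩ := hgen x (Commute.refl x)
  have hz1 : z ≠ 1 := fun h => hx (by rw [hk, h, one_zpow])
  set x' := g * x * g⁻¹ with hx'
  have hx'1 : x' ≠ 1 := by
    intro h
    apply hx
    have : x = g⁻¹ * x' * g := by rw [hx']; group
    rw [this, h]; group
  have hiff : ∀ y, Commute x y ↔ Commute x' y := fun y =>
    ⟨fun hy => commute_trans hx hcom.symm hy, fun hy => commute_trans hx'1 hcom hy⟩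
  have h1 : Commute x' (g * z * g⁻¹) := by
    have h := hxz.map (MulAut.conj g).toMonoidHom
    simpa [MulAut.conj_apply, hx'] using h
  obtain ⟨m, hm⟩ := hgen _ ((hiff _).mpr h1)
  have h2 : Commute x (g⁻¹ * z * g) := by
    have hx'z : Commute x' z := (hiff z).mp hxz
    have h := hx'z.map (MulAut.conj g⁻¹).toMonoidHom
    simp only [MulEquiv.coe_toMonoidHom, MulAut.conj_apply, inv_inv] at h
    rwa [show g⁻¹ * x' * g = x by rw [hx']; group] at h
  obtain ⟨p, hp⟩ := hgen _ h2
  have hzpm : z = z ^ (p * m) := by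
    have hz : z = g⁻¹ * (g * z * g⁻¹) * g := by group
    rw [hm] at hz
    have : g⁻¹ * z ^ m * g = (g⁻¹ * z * g) ^ m := by
      rw [show g⁻¹ * z * g = g⁻¹ * z * g⁻¹⁻¹ by rw [inv_inv],
        conj_zpow, inv_inv]
    rw [this, hp, ← zpow_mul] at hz
    exact hz
  have hpm : p * m = 1 := by
    by_contra hne
    have : z ^ (p * m - 1) = 1 := by
      rw [zpow_sub, ← hzpm, zpow_one]
      simp
    exact hz1 (eq_one_of_pow z (by omega) this)
  rcases Int.mul_eq_one_iff_eq_one_or_neg_one.mp hpm with ⟨hp1, hm1⟩ | ⟨hp1, hm1⟩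
  · have hgz : Commute g z := by
      have h : g * z * g⁻¹ = z := by rw [hm, hm1, zpow_one]
      have : g * z = z * g := by
        have := congrArg (fun w => w * g) h
        simpa [mul_assoc] using this
      exact this
    rw [hk]
    exact hgz.zpow_right k
  · have hminus : g * z * g⁻¹ = z⁻¹ := by rw [hm, hm1, zpow_neg, zpow_one]
    obtain ⟨u, hzu, hugen⟩ := centralizer_cyclic z hz1
    have hg2 : Commute z (g * g) := by
      have h : (g * g) * z * (g * g)⁻¹ = z := by
        rw [show (g*g) * z * (g*g)⁻¹ = g * (g * z * g⁻¹) * g⁻¹ by group, hminus,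
          show g * z⁻¹ * g⁻¹ = (g * z * g⁻¹)⁻¹ by group, hminus, inv_inv]
      exact (mul_inv_eq_iff_eq_mul.mp h).symm
    obtain ⟨s, hs⟩ := hugen _ hg2
    obtain ⟨j, hj⟩ := hugen z (Commute.refl z)
    have hu1 : u ≠ 1 := fun h => hz1 (by rw [hj, h, one_zpow])
    by_cases hs0 : s = 0
    · have hgg : g * g = 1 := by rw [hs, hs0, zpow_zero]
      have hg1 : g = 1 := by
        refine eq_one_of_pow g (n := 2) (by norm_num) ?_
        rw [show (2:ℤ) = 1 + 1 from rfl, zpow_add, zpow_one, hgg]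
      rw [hg1]
      exact Commute.one_left x
    · have hus : u ^ s ≠ 1 := fun h => hu1 (eq_one_of_pow u hs0 h)
      have hgu : Commute g u := by
        have h1' : Commute (u ^ s) g := by
          rw [← hs]
          exact ((Commute.refl g).mul_left (Commute.refl g))
        have h2' : Commute (u ^ s) u := ((Commute.refl u).zpow_left s)
        exact commute_trans hus h1' h2'
      have hgz : Commute g z := by rw [hj]; exact hgu.zpow_right j
      exfalso
      have hfix : g * z * g⁻¹ = z := by rw [hgz.eq]; group
      rw [hfix] at hminus
      have hz2 : z * z = 1 := by
        nth_rewrite 1 [hminus]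
        exact inv_mul_cancel z
      apply hz1
      refine eq_one_of_pow z (n := 2) (by norm_num) ?_
      rw [show (2:ℤ) = 1 + 1 from rfl, zpow_add, zpow_one, hz2]


end FGAux

open scoped commutatorElement

theorem stmt_14 {G : Type*} [Group G] {α : Type*} (S : Set G)
    (hSfin : S.Finite) (hSgen : Subgroup.closure S = ⊤)
    (R₁ R₂ : Set G) (φ : G →* FreeGroup α)
    (hna : ¬ ∀ x ∈ φ.range, ∀ y ∈ φ.range, x * y = y * x)
    (hkill : ∀ r₁ ∈ R₁, ∀ r₂ ∈ R₂, ∀ s ∈ insert (1 : G) S,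
      φ ⁅s * r₂ * s⁻¹, r₁⁆ = 1) :
    (∀ r ∈ R₁, φ r = 1) ∨ (∀ r ∈ R₂, φ r = 1) := by
  by_contra hcon
  push_neg at hcon
  obtain ⟨⟨r₁, hr₁, ha⟩, ⟨r₂, hr₂, hb⟩⟩ := hcon
  set a := φ r₁ with ha'
  set b := φ r₂ with hb'
  have hcomm : ∀ s ∈ insert (1 : G) S, Commute (φ s * b * (φ s)⁻¹) a := by
    intro s hs
    have h := hkill r₁ hr₁ r₂ hr₂ s hs
    rw [map_commutatorElement] at h
    have := commutatorElement_eq_one_iff_commute.mp h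
    simpa [map_mul, map_inv] using this
  have hba : Commute b a := by
    have := hcomm 1 (Set.mem_insert 1 S)
    simpa using this
  have hcent : ∀ s ∈ S, φ s ∈ Subgroup.centralizer ({b} : Set (FreeGroup α)) := by
    intro s hs
    have h1 : Commute (φ s * b * (φ s)⁻¹) b :=
      FGAux.commute_trans ha (hcomm s (Set.mem_insert_of_mem 1 hs)).symm hba.symm
    have h2 : Commute (φ s) b := FGAux.commute_of_conj_commute hb h1
    rw [Subgroup.mem_centralizer_iff]
    simp only [Set.mem_singleton_iff, forall_eq]
    exact h2.symm
  have hrange : φ.range ≤ Subgroup.centralizer ({b} : Set (FreeGroup α)) := by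
    rw [MonoidHom.range_eq_map, ← hSgen, MonoidHom.map_closure]
    refine (Subgroup.closure_le _).mpr ?_
    rintro _ ⟨s, hs, rfl⟩
    exact hcent s hs
  apply hna
  intro x hx y hy
  have hbx : Commute b x := by
    have := hrange hx
    rw [Subgroup.mem_centralizer_iff] at this
    simpa [Commute, SemiconjBy] using this b rfl
  have hby : Commute b y := by
    have := hrange hy
    rw [Subgroup.mem_centralizer_iff] at this
    simpa [Commute, SemiconjBy] using this b rfl
  exact FGAux.commute_trans hb hbx hby
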